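/- If G has a Hamiltonian (TSP) tour of cost at most K, then G' (c copies of G glued at v, with metric-completion edge-costs) has a Hamiltonian tour of cost at most cK. -/

import Mathlib

open Equiv Equiv.Perm Finset

private lemma permCongr_pow_apply {α β : Type*} (e : α ≃ β) (p : Equiv.Perm α) (k : ℕ) (x : β) :
    ((e.permCongr p) ^ k) x = e ((p ^ k) (e.symm x)) := by
  induction k with
  | zero => simp
  | succ k ih =>
    rw [pow_succ', pow_succ', Equiv.Perm.mul_apply, Equiv.Perm.mul_apply, ih]
    simp [Equiv.permCongr_apply]

private lemma permCongr_zpow_apply {α β : Type*} (e : α ≃ β) (p : Equiv.Perm α) (i : ℤ) (x : β) :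
    ((e.permCongr p) ^ i) x = e ((p ^ i) (e.symm x)) := by
  cases i with
  | ofNat k => simpa using permCongr_pow_apply e p k x
  | negSucc k =>
    rw [zpow_negSucc, zpow_negSucc]
    apply (((e.permCongr p) ^ (k + 1))).injective
    rw [Equiv.Perm.coe_inv, Equiv.apply_symm_apply, permCongr_pow_apply]
    simp

private lemma permCongr_isCycle {α β : Type*} (e : α ≃ β) {p : Equiv.Perm α}
    (hp : p.IsCycle) : (e.permCongr p).IsCycle := by
  obtain ⟨x, hx, h⟩ := hp
  refine ⟨e x, fun hh => hx ?_, fun y hy => ?_⟩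
  · apply e.injective
    simpa [Equiv.permCongr_apply] using hh
  · have hy' : p (e.symm y) ≠ e.symm y := by
      intro hc
      apply hy
      simp [Equiv.permCongr_apply, hc]
    obtain ⟨i, hi⟩ := h hy'
    exact ⟨i, by rw [permCongr_zpow_apply]; simp [hi]⟩

private lemma sum_range_mul_split {M : Type*} [AddCommMonoid M] (g : ℕ → M) (c m : ℕ) :
    ∑ j ∈ Finset.range (c * m), g j = ∑ i ∈ Finset.range c, ∑ r ∈ Finset.range m, g (i * m + r) := by
  induction c with
  | zero => simp
  | succ c ih =>
    rw [Finset.sum_range_succ, ← ih, Nat.succ_mul, Finset.sum_range_add]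

private lemma finRotate_val {M : ℕ} (hM : 1 ≤ M) (k : Fin M) :
    ((finRotate M) k).val = (k.val + 1) % M := by
  obtain ⟨M', rfl⟩ : ∃ M', M = M' + 1 := ⟨M - 1, by omega⟩
  rw [finRotate_succ_apply, Fin.add_def]
  simp [Nat.add_mod]

private lemma finRotate_ne {M : ℕ} (hM : 2 ≤ M) (k : Fin M) : finRotate M k ≠ k := by
  intro hc
  have := congrArg Fin.val hc
  rw [finRotate_val (by omega) k] at this
  have hk := k.isLt
  by_cases h : k.val + 1 < M
  · rw [Nat.mod_eq_of_lt h] at this; omega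
  · have h1 : k.val + 1 = M := by omega
    rw [h1, Nat.mod_self] at this; omega

private def Fdef {V : Type*} {v : V} (f : ℕ → V) (c m : ℕ) (hm : 0 < m)
    (hfv : ∀ r, 1 ≤ r → r ≤ m → f r ≠ v) (k : Fin (c * m + 1)) :
    Unit ⊕ Fin c × {x : V // x ≠ v} :=
  if hk : k.val = 0 then Sum.inl ()
  else Sum.inr (⟨(k.val - 1) / m, by
      have := k.isLt
      exact (Nat.div_lt_iff_lt_mul hm).2 (by omega)⟩,
    ⟨f ((k.val - 1) % m + 1), hfv _ (by omega)
      (by have := Nat.mod_lt (k.val - 1) hm; omega)⟩)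

private lemma Fdef_zero {V : Type*} {v : V} (f : ℕ → V) (c m : ℕ) (hm : 0 < m)
    (hfv : ∀ r, 1 ≤ r → r ≤ m → f r ≠ v) (k : Fin (c * m + 1)) (hk : k.val = 0) :
    Fdef f c m hm hfv k = Sum.inl () := dif_pos hk

private lemma Fdef_pos {V : Type*} {v : V} (f : ℕ → V) (c m : ℕ) (hm : 0 < m)
    (hfv : ∀ r, 1 ≤ r → r ≤ m → f r ≠ v) (k : Fin (c * m + 1))
    (i : ℕ) (hi : i < c) (r : ℕ) (hr : r < m) (hk : k.val = i * m + r + 1) :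
    Fdef f c m hm hfv k = Sum.inr (⟨i, hi⟩, ⟨f (r + 1), hfv _ (by omega) (by omega)⟩) := by
  rw [Fdef, dif_neg (by omega)]
  have h2 : k.val - 1 = i * m + r := by omega
  have hdiv : (k.val - 1) / m = i := by
    rw [h2, Nat.mul_comm i m, Nat.mul_add_div hm, Nat.div_eq_of_lt hr, Nat.add_zero]
  have hmod : (k.val - 1) % m = r := by
    rw [h2, Nat.mul_comm i m, Nat.mul_add_mod, Nat.mod_eq_of_lt hr]
  simp only [Sum.inr.injEq, Prod.mk.injEq, Fin.mk.injEq, Subtype.mk.injEq]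
  exact ⟨hdiv, by rw [hmod]⟩

private lemma Fdef_inj {V : Type*} {v : V} (f : ℕ → V) (c m : ℕ) (hm : 0 < m)
    (hfv : ∀ r, 1 ≤ r → r ≤ m → f r ≠ v)
    (hfinj : ∀ a b, a ≤ m → b ≤ m → f a = f b → a = b) :
    Function.Injective (Fdef f c m hm hfv) := by
  intro k k' h
  by_cases h0 : k.val = 0 <;> by_cases h0' : k'.val = 0
  · exact Fin.ext (by omega)
  · rw [Fdef, dif_pos h0, Fdef, dif_neg h0'] at h; exact absurd h (by simp)
  · rw [Fdef, dif_neg h0, Fdef, dif_pos h0'] at h; exact absurd h (by simp)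
  · rw [Fdef, dif_neg h0, Fdef, dif_neg h0'] at h
    simp only [Sum.inr.injEq, Prod.mk.injEq, Fin.mk.injEq, Subtype.mk.injEq] at h
    obtain ⟨hi, hx⟩ := h
    have m1 := Nat.mod_lt (k.val - 1) hm
    have m2 := Nat.mod_lt (k'.val - 1) hm
    have hr : (k.val - 1) % m = (k'.val - 1) % m := by
      have := hfinj _ _ (by omega) (by omega) hx
      omega
    have d1 := Nat.div_add_mod (k.val - 1) m
    have d2 := Nat.div_add_mod (k'.val - 1) m
    have : k.val - 1 = k'.val - 1 := by rw [← d1, ← d2, hi, hr]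
    exact Fin.ext (by omega)

private lemma sum_range_split_last {M : Type*} [AddCommMonoid M] (g : ℕ → M) (m : ℕ)
    (hm : 0 < m) : ∑ r ∈ Finset.range m, g r = ∑ r ∈ Finset.range (m - 1), g r + g (m - 1) := by
  obtain ⟨m', rfl⟩ : ∃ m', m = m' + 1 := ⟨m - 1, by omega⟩
  simp [Finset.sum_range_succ]

theorem stmt_5 {V : Type*} [Fintype V] [DecidableEq V]
    (hcard : 3 ≤ Fintype.card V)
    (d : V → V → ℝ) (v : V)
    (hsym : ∀ x y : V, d x y = d y x)
    (hdiag : ∀ x : V, d x x = 0)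
    (htri : ∀ x y z : V, d x z ≤ d x y + d y z)
    (hval : ∀ x y : V, x ≠ y → d x y = 1 ∨ d x y = 2)
    (c : ℕ) (hc : 1 ≤ c)
    (D : (Unit ⊕ Fin c × {x : V // x ≠ v}) → (Unit ⊕ Fin c × {x : V // x ≠ v}) → ℝ)
    (hDuu : D (Sum.inl ()) (Sum.inl ()) = 0)
    (hDvx : ∀ p : Fin c × {x : V // x ≠ v}, D (Sum.inl ()) (Sum.inr p) = d v p.2.1)
    (hDxv : ∀ p : Fin c × {x : V // x ≠ v}, D (Sum.inr p) (Sum.inl ()) = d p.2.1 v)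
    (hDsame : ∀ (i : Fin c) (x y : {x : V // x ≠ v}),
      D (Sum.inr (i, x)) (Sum.inr (i, y)) = d x.1 y.1)
    (hDdiff : ∀ (i j : Fin c) (x y : {x : V // x ≠ v}), i ≠ j →
      D (Sum.inr (i, x)) (Sum.inr (j, y)) = d x.1 v + d v y.1)
    (K : ℝ)
    (σ : Equiv.Perm V) (hσ : σ.IsCycle) (hσs : σ.support = Finset.univ)
    (hK : ∑ x : V, d x (σ x) ≤ K) :
    ∃ τ : Equiv.Perm (Unit ⊕ Fin c × {x : V // x ≠ v}),
      τ.IsCycle ∧ τ.support = Finset.univ ∧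
      ∑ p, D p (τ p) ≤ c * K := by
  classical
  set n := Fintype.card V with hn
  have hm2 : 2 ≤ n - 1 := by omega
  set m := n - 1 with hmdef
  have hmn : m + 1 = n := by omega
  have hmpos : 0 < m := by omega
  set N := c * m + 1 with hN
  have hN3 : 3 ≤ N := by nlinarith
  -- the walk along the cycle
  set f : ℕ → V := fun k => (σ ^ k) v with hf
  have hf0 : f 0 = v := by simp [hf]
  have hfsucc : ∀ k, f (k + 1) = σ (f k) := by
    intro k; simp only [hf]; rw [pow_succ', Equiv.Perm.mul_apply]
  have hfix : ∀ x : V, σ x ≠ x := by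
    intro x
    have : x ∈ σ.support := by rw [hσs]; exact Finset.mem_univ x
    exact Equiv.Perm.mem_support.1 this
  have hord : orderOf σ = n := by
    rw [hσ.orderOf, hσs, Finset.card_univ]
  have hσn : σ ^ n = 1 := by rw [← hord]; exact pow_orderOf_eq_one σ
  have hfn : f n = v := by simp [hf, hσn]
  have hinj : ∀ a b, a < n → b < n → f a = f b → a = b := by
    intro a b ha hb hab
    rcases Nat.le_total a b with hle | hle
    · by_contra hne
      have h1 : (σ ^ (b - a)) v = v := by
        have : (σ ^ a) ((σ ^ (b - a)) v) = (σ ^ a) v := by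
          rw [← Equiv.Perm.mul_apply, ← pow_add]
          rw [Nat.add_sub_cancel' hle]
          exact hab.symm
        exact (σ ^ a).injective this
      have h2 : σ ^ (b - a) = 1 := (hσ.pow_eq_one_iff' (hfix v)).2 h1
      have h3 : orderOf σ ∣ (b - a) := orderOf_dvd_of_pow_eq_one h2
      rw [hord] at h3
      have : b - a = 0 := Nat.eq_zero_of_dvd_of_lt h3 (by omega)
      omega
    · by_contra hne
      have h1 : (σ ^ (a - b)) v = v := by
        have : (σ ^ b) ((σ ^ (a - b)) v) = (σ ^ b) v := by
          rw [← Equiv.Perm.mul_apply, ← pow_add]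
          rw [Nat.add_sub_cancel' hle]
          exact hab
        exact (σ ^ b).injective this
      have h2 : σ ^ (a - b) = 1 := (hσ.pow_eq_one_iff' (hfix v)).2 h1
      have h3 : orderOf σ ∣ (a - b) := orderOf_dvd_of_pow_eq_one h2
      rw [hord] at h3
      have : a - b = 0 := Nat.eq_zero_of_dvd_of_lt h3 (by omega)
      omega
  have hfv : ∀ r, 1 ≤ r → r ≤ m → f r ≠ v := by
    intro r h1 h2 hcon
    have : r = 0 := hinj r 0 (by omega) (by omega) (by rw [hf0]; exact hcon)
    omega
  have hfinj : ∀ a b, a ≤ m → b ≤ m → f a = f b → a = b := fun a b ha hb =>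
    hinj a b (by omega) (by omega)
  -- the equivalence
  have hcardT : Fintype.card (Unit ⊕ Fin c × {x : V // x ≠ v}) = N := by
    have hW : Fintype.card {x : V // x ≠ v} = m := by
      simp [Fintype.card_subtype_compl, hmdef, hn]
    simp [Fintype.card_sum, Fintype.card_prod, hW, hN]
    ring
  have hbij : Function.Bijective (Fdef f c m hmpos hfv) := by
    rw [Fintype.bijective_iff_injective_and_card]
    exact ⟨Fdef_inj f c m hmpos hfv hfinj, by rw [Fintype.card_fin, hcardT]⟩
  set E : Fin N ≃ (Unit ⊕ Fin c × {x : V // x ≠ v}) := Equiv.ofBijective _ hbij with hE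
  have hEapp : ∀ k : Fin N, E k = Fdef f c m hmpos hfv k := fun k => rfl
  set τ := E.permCongr (finRotate N) with hτ
  have hcyc : (finRotate N).IsCycle := isCycle_finRotate_of_le (by omega)
  refine ⟨τ, permCongr_isCycle E hcyc, ?_, ?_⟩
  · ext x
    simp only [Equiv.Perm.mem_support, Finset.mem_univ, iff_true]
    intro hcon
    rw [hτ, Equiv.permCongr_apply] at hcon
    have hcon' : E (finRotate N (E.symm x)) = E (E.symm x) := by
      rw [Equiv.apply_symm_apply]; exact hcon
    exact finRotate_ne (by omega) _ (E.injective hcon')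
  · -- cost bound
    set Fv : ℕ → (Unit ⊕ Fin c × {x : V // x ≠ v}) :=
      fun j => Fdef f c m hmpos hfv ⟨j % N, Nat.mod_lt j (by omega)⟩ with hFv
    set t : ℕ → ℝ := fun k => d (f k) (f (k + 1)) with ht
    have step1 : ∑ p, D p (τ p) = ∑ j ∈ Finset.range N, D (Fv j) (Fv (j + 1)) := by
      rw [← Equiv.sum_comp E (fun p => D p (τ p)),
        ← Fin.sum_univ_eq_sum_range (fun j => D (Fv j) (Fv (j + 1))) N]
      apply Finset.sum_congr rfl
      intro k _
      have e1 : Fv k.val = E k := by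
        simp only [hFv]
        rw [hEapp]
        exact congrArg _ (Fin.ext (Nat.mod_eq_of_lt k.isLt))
      have e2 : Fv (k.val + 1) = E (finRotate N k) := by
        simp only [hFv]
        rw [hEapp]
        exact congrArg _ (Fin.ext (finRotate_val (by omega) k).symm)
      have e3 : τ (E k) = E (finRotate N k) := by
        rw [hτ, Equiv.permCongr_apply, Equiv.symm_apply_apply]
      rw [e3, ← e2, ← e1]
    have hFv0 : Fv 0 = Sum.inl () := by
      simp only [hFv]
      apply Fdef_zero
      simp
    have hFvN : Fv (c * m + 1) = Sum.inl () := by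
      simp only [hFv]
      apply Fdef_zero
      show (c * m + 1) % N = 0
      rw [← hN, Nat.mod_self]
    have hFvpos : ∀ (i r : ℕ) (hi : i < c) (hr : r < m),
        Fv (i * m + r + 1) = Sum.inr (⟨i, hi⟩, ⟨f (r + 1), hfv _ (by omega) (by omega)⟩) := by
      intro i r hi hr
      have h1 : (i + 1) * m ≤ c * m := Nat.mul_le_mul_right m (by omega)
      have h2 : (i + 1) * m = i * m + m := by ring
      have hlt : i * m + r + 1 < N := by rw [hN]; omega
      simp only [hFv]
      apply Fdef_pos _ _ _ _ _ _ i hi r hr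
      show (i * m + r + 1) % N = i * m + r + 1
      exact Nat.mod_eq_of_lt hlt
    have key0 : D (Fv 0) (Fv 1) = t 0 := by
      have h1 := hFvpos 0 0 (by omega) (by omega)
      rw [show 0 * m + 0 + 1 = 1 from by omega] at h1
      rw [hFv0, h1, hDvx]
      simp only [ht]
      rw [hf0]
    have key2 : ∀ (i r : ℕ), i < c → r + 1 < m →
        D (Fv (i * m + r + 1)) (Fv (i * m + r + 1 + 1)) = t (r + 1) := by
      intro i r hi hr
      rw [hFvpos i r hi (by omega), show i * m + r + 1 + 1 = i * m + (r + 1) + 1 from by ring,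
        hFvpos i (r + 1) hi hr, hDsame]
    have key3 : ∀ (i : ℕ), i + 1 < c →
        D (Fv (i * m + (m - 1) + 1)) (Fv (i * m + (m - 1) + 1 + 1)) = t m + t 0 := by
      intro i hi
      have h2 : (i + 1) * m = i * m + m := by ring
      rw [hFvpos i (m - 1) (by omega) (by omega),
        show i * m + (m - 1) + 1 + 1 = (i + 1) * m + 0 + 1 from by omega,
        hFvpos (i + 1) 0 hi (by omega),
        hDdiff _ _ _ _ (by simp only [ne_eq, Fin.mk.injEq]; omega)]
      simp only [ht]
      have hfm : f (m + 1) = v := by rw [hmn, hfn]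
      rw [show m - 1 + 1 = m from by omega, hfm, hf0]
    have key4 : D (Fv ((c - 1) * m + (m - 1) + 1)) (Fv ((c - 1) * m + (m - 1) + 1 + 1)) = t m := by
      have h2 : (c - 1 + 1) * m = (c - 1) * m + m := by ring
      have h3 : c - 1 + 1 = c := by omega
      rw [h3] at h2
      rw [hFvpos (c - 1) (m - 1) (by omega) (by omega),
        show (c - 1) * m + (m - 1) + 1 + 1 = c * m + 1 from by omega, hFvN, hDxv]
      simp only [ht]
      have hfm : f (m + 1) = v := by rw [hmn, hfn]
      rw [show m - 1 + 1 = m from by omega, hfm]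
    have inner : ∀ i ∈ Finset.range c,
        ∑ r ∈ Finset.range m, D (Fv (i * m + r + 1)) (Fv (i * m + r + 1 + 1))
        = (∑ r ∈ Finset.range m, t (r + 1)) + (if i + 1 < c then t 0 else 0) := by
      intro i hi
      rw [Finset.mem_range] at hi
      rw [sum_range_split_last _ m hmpos, sum_range_split_last (fun r => t (r + 1)) m hmpos]
      have hmid : ∑ r ∈ Finset.range (m - 1), D (Fv (i * m + r + 1)) (Fv (i * m + r + 1 + 1))
          = ∑ r ∈ Finset.range (m - 1), t (r + 1) := by
        apply Finset.sum_congr rfl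
        intro r hr
        rw [Finset.mem_range] at hr
        exact key2 i r hi (by omega)
      rw [hmid]
      by_cases hi1 : i + 1 < c
      · rw [key3 i hi1, if_pos hi1, show m - 1 + 1 = m from by omega]
        ring
      · have hieq : i = c - 1 := by omega
        subst hieq
        rw [key4, if_neg hi1, show m - 1 + 1 = m from by omega]
        ring
    have Hsum : ∑ j ∈ Finset.range N, D (Fv j) (Fv (j + 1))
        = c * ∑ k ∈ Finset.range n, t k := by
      rw [hN, Finset.sum_range_succ' (fun j => D (Fv j) (Fv (j + 1))) (c * m),
        sum_range_mul_split (fun j => D (Fv (j + 1)) (Fv (j + 1 + 1))) c m,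
        Finset.sum_congr rfl inner, Finset.sum_add_distrib, Finset.sum_const,
        Finset.card_range, key0]
      have hite : ∑ i ∈ Finset.range c, (if i + 1 < c then t 0 else 0) = (c - 1 : ℕ) * t 0 := by
        rw [sum_range_split_last _ c (by omega)]
        have h1 : ∑ i ∈ Finset.range (c - 1), (if i + 1 < c then t 0 else 0)
            = ∑ i ∈ Finset.range (c - 1), t 0 := by
          apply Finset.sum_congr rfl
          intro i hi
          rw [Finset.mem_range] at hi
          exact if_pos (by omega)
        rw [h1, if_neg (by omega), Finset.sum_const, Finset.card_range, add_zero, nsmul_eq_mul]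
      rw [hite, ← hmn, Finset.sum_range_succ' t m, nsmul_eq_mul, Nat.cast_sub hc]
      push_cast
      ring
    have Htour : ∑ k ∈ Finset.range n, t k = ∑ x : V, d x (σ x) := by
      have hbij2 : Function.Bijective (fun k : Fin n => f k.val) := by
        rw [Fintype.bijective_iff_injective_and_card]
        constructor
        · intro a b hab
          exact Fin.ext (hinj _ _ a.isLt b.isLt hab)
        · rw [Fintype.card_fin, hn]
      rw [← Equiv.sum_comp (Equiv.ofBijective _ hbij2) (fun x => d x (σ x)),
        ← Fin.sum_univ_eq_sum_range t n]
      apply Finset.sum_congr rfl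
      intro k _
      simp only [Equiv.ofBijective_apply, ht]
      rw [hfsucc]
    rw [step1, Hsum, Htour]
    exact mul_le_mul_of_nonneg_left hK (by positivity)
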